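/- Let G be a simple connected graph with circuit rank r. The number of spanning trees of the subdivision graph satisfies N_st(s(G)) = 2^r · N_st(G), and hence N_st(sⁿ(G)) = 2^{rn} · N_st(G) for all n ≥ 0. -/

import Mathlib

/-- The subdivision graph `s(G)`: one new vertex inserted on each edge of `G`. -/
def subdivision {V : Type} (G : SimpleGraph V) : SimpleGraph (V ⊕ G.edgeSet) where
  Adj x y :=
    match x, y with
    | Sum.inl v, Sum.inr e => v ∈ (e : Sym2 V)
    | Sum.inr e, Sum.inl v => v ∈ (e : Sym2 V)
    | _, _ => False
  symm := ⟨by rintro (v | e) (w | f) h <;> exact h⟩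
  loopless := ⟨by rintro (v | e) h <;> exact h⟩

/-- The iterated subdivision `sⁿ(G)`, as a pair (vertex type, graph). -/
def iterSubdiv {V : Type} (G : SimpleGraph V) : ℕ → (W : Type) × SimpleGraph W
  | 0 => ⟨V, G⟩
  | n + 1 => ⟨_, subdivision (iterSubdiv G n).2⟩

instance iterSubdivFinite {V : Type} [Finite V] (G : SimpleGraph V) :
    ∀ n, Finite (iterSubdiv G n).1
  | 0 => ‹Finite V›
  | n + 1 => by
    haveI := iterSubdivFinite G n
    exact inferInstanceAs (Finite ((iterSubdiv G n).1 ⊕ (iterSubdiv G n).2.edgeSet))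

open Classical in
noncomputable def normAdj {V : Type} (G : SimpleGraph V) : Matrix V V ℝ :=
  Matrix.of fun i j =>
    if G.Adj i j then
      1 / Real.sqrt ((Nat.card (G.neighborSet i) : ℝ) * (Nat.card (G.neighborSet j) : ℝ))
    else 0

open Classical in
noncomputable def normLap {V : Type} (G : SimpleGraph V) : Matrix V V ℝ :=
  1 - normAdj G

theorem normAdj_isHermitian {V : Type} (G : SimpleGraph V) : (normAdj G).IsHermitian := by
  unfold Matrix.IsHermitian
  ext i j
  simp only [Matrix.conjTranspose_apply, normAdj, Matrix.of_apply, star_trivial]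
  rw [G.adj_comm]
  rcases em (G.Adj i j) with h | h <;> simp [h, mul_comm]

open Classical in
theorem normLap_isHermitian {V : Type} (G : SimpleGraph V) : (normLap G).IsHermitian :=
  Matrix.isHermitian_one.sub (normAdj_isHermitian G)

/-- `μ` is an eigenvalue of the matrix `M`. -/
def IsEigenvalueM {V : Type} [Finite V] (M : Matrix V V ℝ) (μ : ℝ) : Prop :=
  haveI := Fintype.ofFinite V
  haveI := Classical.decEq V
  Module.End.HasEigenvalue (Matrix.toLin' M) μ

/-- The multiplicity of `μ` as an eigenvalue of `M` (dimension of the eigenspace). -/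
noncomputable def eigMult {V : Type} [Finite V] (M : Matrix V V ℝ) (μ : ℝ) : ℕ :=
  haveI := Fintype.ofFinite V
  haveI := Classical.decEq V
  Module.finrank ℝ ↥(Module.End.eigenspace (Matrix.toLin' M) μ)

open Classical in
noncomputable def kemeny {V : Type} [Finite V] (G : SimpleGraph V) : ℝ :=
  haveI := Fintype.ofFinite V
  haveI := Classical.decEq V
  ∑ i : V, (if (normLap_isHermitian G).eigenvalues i = 0 then 0
            else ((normLap_isHermitian G).eigenvalues i)⁻¹)

/-- The multiplicative degree-Kirchhoff index `Kf* = 2|E| · Σ_{k≥2} 1/λ_k`. -/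
noncomputable def kirchhoffStar {V : Type} [Finite V] (G : SimpleGraph V) : ℝ :=
  2 * (Nat.card G.edgeSet : ℝ) * kemeny G

/-- The number of spanning trees of `G`. -/
noncomputable def numSpanningTrees {V : Type} (G : SimpleGraph V) : ℕ :=
  Nat.card {H : G.Subgraph // H.IsSpanning ∧ H.coe.IsTree}

open SimpleGraph


section Generic
variable {A B : Type} {G1 : SimpleGraph A} {G2 : SimpleGraph B}

lemma iso_isAcyclic (e : G1 ≃g G2) (h : G1.IsAcyclic) : G2.IsAcyclic := by
  intro v c hc
  exact h (c.map e.symm.toHom) (hc.map (RelIso.injective e.symm))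

lemma iso_isTree_iff (e : G1 ≃g G2) : G1.IsTree ↔ G2.IsTree := by
  simp only [isTree_iff]
  constructor
  · rintro ⟨hc, ha⟩
    exact ⟨e.connected_iff.mp hc, iso_isAcyclic e ha⟩
  · rintro ⟨hc, ha⟩
    exact ⟨e.connected_iff.mpr hc, iso_isAcyclic e.symm ha⟩

lemma connected_card_le {W : Type} [Fintype W] (N : SimpleGraph W) (h : N.Connected) :
    Fintype.card W ≤ N.edgeSet.ncard + 1 := by
  classical
  obtain ⟨root⟩ := h.nonempty
  have hex : ∀ w, w ≠ root → ∃ b, N.Adj w b ∧ N.dist b root + 1 = N.dist w root := by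
    intro w hw
    obtain ⟨p, hp, hl⟩ := h.exists_path_of_dist w root
    cases p with
    | @cons _ b _ hadj q =>
      refine ⟨b, hadj, ?_⟩
      have h1 : N.dist b root ≤ q.length := dist_le q
      have h2 : N.dist w root ≤ N.dist w b + N.dist b root := h.dist_triangle
      have h3 : N.dist w b = 1 := dist_eq_one_iff_adj.mpr hadj
      simp only [Walk.length_cons] at hl
      omega
    | nil => exact absurd rfl hw
  choose! nxt hadj hdist using hex
  have hinj : Set.InjOn (fun w => s(w, nxt w)) (Finset.univ.erase root) := by
    intro w hw w' hw' hs
    simp only [Finset.coe_erase, Set.mem_diff, Set.mem_singleton_iff] at hw hw'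
    simp only [Sym2.eq_iff] at hs
    rcases hs with ⟨h1, _⟩ | ⟨h1, h2⟩
    · exact h1
    · have d1 := hdist w hw.2
      have d2 := hdist w' hw'.2
      have hp1 : 0 < N.dist w root := h.pos_dist_of_ne hw.2
      have hp2 : 0 < N.dist w' root := h.pos_dist_of_ne hw'.2
      rw [← h1] at d2
      rw [h2] at d1
      omega
  have hmaps : ∀ w ∈ Finset.univ.erase root, s(w, nxt w) ∈ N.edgeFinset := by
    intro w hw
    rw [mem_edgeFinset, mem_edgeSet]
    exact hadj w (Finset.ne_of_mem_erase hw)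
  have hle := Finset.card_le_card_of_injOn _ hmaps hinj
  rw [Finset.card_erase_of_mem (Finset.mem_univ root), Finset.card_univ] at hle
  have h2 : N.edgeFinset.card = N.edgeSet.ncard := (Set.ncard_eq_toFinset_card' _).symm
  omega

lemma isTree_of_connected_of_card {W : Type} [Fintype W] (N : SimpleGraph W)
    (h : N.Connected) (hcard : N.edgeSet.ncard + 1 = Fintype.card W) : N.IsTree := by
  classical
  refine ⟨h, ?_⟩
  by_contra hcyc
  rw [IsAcyclic] at hcyc
  push_neg at hcyc
  obtain ⟨v, c, hc⟩ := hcyc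
  have hne : c.edges ≠ [] := by
    intro he
    have := hc.three_le_length
    rw [← Walk.length_edges, he] at this
    simp at this
  obtain ⟨e, he⟩ := List.exists_mem_of_ne_nil _ hne
  induction e using Sym2.ind with
  | _ a b =>
  have hab : N.Adj a b := c.adj_of_mem_edges he
  have hreach : (N \ fromEdgeSet {s(a, b)}).Reachable a b := by
    by_contra hbr
    have hbridge : N.IsBridge s(a, b) := isBridge_iff.mpr hbr
    rw [isBridge_iff_adj_and_forall_cycle_notMem hab] at hbridge
    exact hbridge c hc he
  set N' := N \ fromEdgeSet {s(a, b)} with hN'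
  have hconn' : N'.Connected := by
    rw [connected_iff]
    refine ⟨fun x y => ?_, h.nonempty⟩
    obtain ⟨p⟩ := h.preconnected x y
    induction p with
    | nil => exact Reachable.refl _
    | cons hxy q ih =>
      refine Reachable.trans ?_ ih
      rename_i x₁ x₂ _
      by_cases hee : s(x₁, x₂) = s(a, b)
      · rw [Sym2.eq_iff] at hee
        rcases hee with ⟨rfl, rfl⟩ | ⟨rfl, rfl⟩
        · exact hreach
        · exact hreach.symm
      · exact Adj.reachable ⟨hxy, by simp [hee]⟩
  have hedge' : N'.edgeSet = N.edgeSet \ {s(a, b)} := by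
    ext f
    simp only [hN', edgeSet_sdiff, edgeSet_fromEdgeSet, Set.mem_diff, Set.mem_setOf_eq,
      Set.mem_singleton_iff]
    constructor
    · rintro ⟨hf, hf2⟩
      exact ⟨hf, fun hfa => hf2 ⟨hfa, by simp [hfa, hab.ne]⟩⟩
    · rintro ⟨hf1, hf2⟩
      exact ⟨hf1, by rintro ⟨h1, _⟩; exact hf2 h1⟩
  have hlt := connected_card_le N' hconn'
  rw [hedge', Set.ncard_diff_singleton_of_mem (s := N.edgeSet) (N.mem_edgeSet.mpr hab)] at hlt
  have hpos : 0 < N.edgeSet.ncard := by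
    rw [Set.ncard_pos]
    exact ⟨s(a, b), hab⟩
  omega

end Generic

section Subdiv
variable {V : Type} {G : SimpleGraph V}

lemma subdivision_adj_inl_inr {v : V} {e : G.edgeSet} :
    (subdivision G).Adj (Sum.inl v) (Sum.inr e) ↔ v ∈ (e : Sym2 V) := Iff.rfl

lemma not_subdivision_adj_inl_inl {v w : V} : ¬ (subdivision G).Adj (Sum.inl v) (Sum.inl w) :=
  fun h => h

lemma not_subdivision_adj_inr_inr {e f : G.edgeSet} :
    ¬ (subdivision G).Adj (Sum.inr e) (Sum.inr f) := fun h => h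

/-- Each edge of a subgraph of the subdivision joins `inl v` and `inr e`. -/
noncomputable def fiberEquiv (K : (subdivision G).Subgraph) :
    (Σ e : G.edgeSet, {v : V // K.Adj (Sum.inl v) (Sum.inr e)}) ≃ K.edgeSet := by
  refine Equiv.ofBijective
    (fun p => ⟨s(Sum.inl p.2.1, Sum.inr p.1), SimpleGraph.Subgraph.mem_edgeSet.mpr p.2.2⟩) ⟨?_, ?_⟩
  · rintro ⟨e, v, hv⟩ ⟨e', v', hv'⟩ h
    simp only [Subtype.mk.injEq, Sym2.eq_iff] at h
    rcases h with ⟨h1, h2⟩ | ⟨h1, h2⟩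
    · cases h1; cases h2; rfl
    · exact absurd h1 (by simp)
  · rintro ⟨f, hf⟩
    induction f using Sym2.ind with
    | _ x y =>
      rw [SimpleGraph.Subgraph.mem_edgeSet] at hf
      match x, y with
      | Sum.inl v, Sum.inr e => exact ⟨⟨e, v, hf⟩, rfl⟩
      | Sum.inr e, Sum.inl v => exact ⟨⟨e, v, hf.symm⟩, Subtype.ext (Sym2.eq_swap)⟩
      | Sum.inl v, Sum.inl w => exact absurd (K.adj_sub hf) not_subdivision_adj_inl_inl
      | Sum.inr e, Sum.inr e' => exact absurd (K.adj_sub hf) not_subdivision_adj_inr_inr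

/-- An edge of a simple graph, as a set of vertices, has exactly two elements. -/
lemma card_mem_edge (e : G.edgeSet) : Nat.card {v : V // v ∈ (e : Sym2 V)} = 2 := by
  obtain ⟨f, hf⟩ := e
  induction f using Sym2.ind with
  | _ a b =>
    have hab : a ≠ b := (G.mem_edgeSet.mp hf).ne
    have : {v : V | v ∈ (s(a, b) : Sym2 V)} = {a, b} := by
      ext v; simp [Sym2.mem_iff]
    calc Nat.card {v : V // v ∈ ((⟨s(a,b), hf⟩ : G.edgeSet) : Sym2 V)}
        = Nat.card {v : V | v ∈ (s(a, b) : Sym2 V)} := rfl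
      _ = ({a, b} : Set V).ncard := by rw [this, Nat.card_coe_set_eq]
      _ = 2 := Set.ncard_pair hab

open Classical in
lemma card_edgeSet_eq (K : (subdivision G).Subgraph) [Fintype V] (P : G.edgeSet → Prop)
    (hfib : ∀ e : G.edgeSet,
      Nat.card {v : V // K.Adj (Sum.inl v) (Sum.inr e)} = if P e then 2 else 1) :
    Nat.card K.edgeSet = Nat.card G.edgeSet + Nat.card {e : G.edgeSet // P e} := by
  classical
  rw [← Nat.card_congr (fiberEquiv K)]
  rw [Nat.card_eq_fintype_card, Fintype.card_sigma]
  have : ∀ e : G.edgeSet, Fintype.card {v : V // K.Adj (Sum.inl v) (Sum.inr e)}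
      = if P e then 2 else 1 := by
    intro e
    rw [← Nat.card_eq_fintype_card]
    exact hfib e
  have h2 : ∀ e : G.edgeSet, (if P e then 2 else 1) = 1 + (if P e then 1 else 0) := by
    intro e; by_cases h : P e <;> simp [h]
  simp_rw [this, h2]
  rw [Finset.sum_add_distrib, Finset.sum_const, Finset.sum_ite, Finset.sum_const,
    Finset.sum_const, smul_eq_mul, mul_one, smul_eq_mul, mul_one, smul_eq_mul, mul_zero, add_zero,
    Finset.card_univ, ← Nat.card_eq_fintype_card]
  congr 1
  rw [Nat.card_eq_fintype_card, Fintype.card_subtype]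

end Subdiv

section Proj
variable {V : Type} {G : SimpleGraph V}

/-- The projection of a subgraph of the subdivision back to `G`:
an edge is kept iff both of its halves are present. -/
def projSub (K : (subdivision G).Subgraph) : G.Subgraph where
  verts := Set.univ
  Adj u v := ∃ h : G.Adj u v,
    K.Adj (Sum.inl u) (Sum.inr ⟨s(u, v), h⟩) ∧ K.Adj (Sum.inl v) (Sum.inr ⟨s(u, v), h⟩)
  adj_sub := fun ⟨h, _⟩ => h
  edge_vert := fun _ => Set.mem_univ _
  symm := by
    constructor
    rintro u v ⟨h, h1, h2⟩
    have he : (⟨s(v, u), h.symm⟩ : G.edgeSet) = ⟨s(u, v), h⟩ := Subtype.ext (Sym2.eq_swap)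
    exact ⟨h.symm, by rw [he]; exact h2, by rw [he]; exact h1⟩

lemma projSub_isSpanning (K : (subdivision G).Subgraph) : (projSub K).IsSpanning :=
  fun _ => Set.mem_univ _

lemma projSub_edge_iff (K : (subdivision G).Subgraph) (e : G.edgeSet) :
    (e : Sym2 V) ∈ (projSub K).edgeSet ↔
      ∀ v ∈ (e : Sym2 V), K.Adj (Sum.inl v) (Sum.inr e) := by
  obtain ⟨f, hf⟩ := e
  induction f using Sym2.ind with
  | _ a b =>
    rw [SimpleGraph.Subgraph.mem_edgeSet]
    constructor
    · rintro ⟨h, h1, h2⟩ v hv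
      rw [Sym2.mem_iff] at hv
      rcases hv with rfl | rfl
      · exact h1
      · exact h2
    · intro hall
      exact ⟨G.mem_edgeSet.mp hf, hall a (Sym2.mem_mk_left a b), hall b (Sym2.mem_mk_right a b)⟩

/-- Two subgraphs of the subdivision with full vertex sets and the same mixed
adjacencies are equal. -/
lemma subdiv_subgraph_ext (K K' : (subdivision G).Subgraph) (hv : K.verts = K'.verts)
    (h : ∀ v e, K.Adj (Sum.inl v) (Sum.inr e) ↔ K'.Adj (Sum.inl v) (Sum.inr e)) : K = K' := by
  refine SimpleGraph.Subgraph.ext hv ?_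
  funext x y
  match x, y with
  | Sum.inl v, Sum.inr e => exact propext (h v e)
  | Sum.inr e, Sum.inl v =>
    exact propext ⟨fun hh => ((h v e).mp hh.symm).symm, fun hh => ((h v e).mpr hh.symm).symm⟩
  | Sum.inl v, Sum.inl w =>
    exact propext (iff_of_false (fun hh => not_subdivision_adj_inl_inl (K.adj_sub hh))
      (fun hh => not_subdivision_adj_inl_inl (K'.adj_sub hh)))
  | Sum.inr e, Sum.inr f =>
    exact propext (iff_of_false (fun hh => not_subdivision_adj_inr_inr (K.adj_sub hh))
      (fun hh => not_subdivision_adj_inr_inr (K'.adj_sub hh)))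

/-- Walks in a subgraph of the subdivision between original vertices project to `projSub`. -/
lemma proj_reachable (K : (subdivision G).Subgraph) :
    ∀ (n : ℕ) {x y : V ⊕ G.edgeSet} (p : K.spanningCoe.Walk x y), p.length = n →
      ∀ u v, x = Sum.inl u → y = Sum.inl v → (projSub K).spanningCoe.Reachable u v := by
  intro n
  induction n using Nat.strong_induction_on with
  | _ n IH =>
    intro x y p hn u v hx hy
    cases p with
    | nil =>
      subst hx
      cases hy
      exact Reachable.refl _
    | @cons _ b _ h q =>
      subst hx hy
      match b, h, q with
      | Sum.inl w, h, q => exact absurd (K.adj_sub h) not_subdivision_adj_inl_inl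
      | Sum.inr e, h, q =>
        cases q with
        | @cons _ c _ h' q' =>
          match c, h', q' with
          | Sum.inr e', h', q' => exact absurd (K.adj_sub h') not_subdivision_adj_inr_inr
          | Sum.inl w, h', q' =>
            have hlen : q'.length < n := by
              simp only [Walk.length_cons] at hn
              omega
            have hrest : (projSub K).spanningCoe.Reachable w v :=
              IH q'.length hlen q' rfl w v rfl rfl
            by_cases huw : u = w
            · exact huw ▸ hrest
            · have hu : u ∈ (e : Sym2 V) := K.adj_sub h
              have hw : w ∈ (e : Sym2 V) := K.adj_sub h'.symm
              have he : (e : Sym2 V) = s(u, w) := (Sym2.mem_and_mem_iff huw).mp ⟨hu, hw⟩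
              have hadj : G.Adj u w := G.mem_edgeSet.mp (he ▸ e.2)
              have heq : (⟨s(u, w), hadj⟩ : G.edgeSet) = e := Subtype.ext he.symm
              have hP : (projSub K).Adj u w := by
                refine ⟨hadj, ?_, ?_⟩ <;> rw [heq]
                · exact h
                · exact h'.symm
              exact (Adj.reachable hP).trans hrest

/-- In a connected spanning subgraph of the subdivision, every subdivision vertex
has at least one of its two half-edges. -/
lemma exists_half (K : (subdivision G).Subgraph) (hconn : K.spanningCoe.Connected)
    (e : G.edgeSet) (u₀ : V) : ∃ v, K.Adj (Sum.inl v) (Sum.inr e) := by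
  obtain ⟨p⟩ := hconn.preconnected (Sum.inr e) (Sum.inl u₀)
  cases p with
  | @cons _ c _ h' q =>
    match c, h', q with
    | Sum.inr e', h', q => exact absurd (K.adj_sub h') not_subdivision_adj_inr_inr
    | Sum.inl w, h', q => exact ⟨w, h'.symm⟩

/-- If `e` is not an edge of the projection, at most/exactly one half is present. -/
lemma half_unique (K : (subdivision G).Subgraph) (hconn : K.spanningCoe.Connected)
    (e : G.edgeSet) (u₀ : V) (he : (e : Sym2 V) ∉ (projSub K).edgeSet) :
    ∃! v, K.Adj (Sum.inl v) (Sum.inr e) := by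
  obtain ⟨v, hv⟩ := exists_half K hconn e u₀
  refine ⟨v, hv, fun w hw => ?_⟩
  by_contra hne
  apply he
  rw [projSub_edge_iff]
  intro z hz
  have hvmem : v ∈ (e : Sym2 V) := K.adj_sub hv
  have hwmem : w ∈ (e : Sym2 V) := K.adj_sub hw
  have hee : (e : Sym2 V) = s(w, v) := (Sym2.mem_and_mem_iff hne).mp ⟨hwmem, hvmem⟩
  rw [hee, Sym2.mem_iff] at hz
  rcases hz with rfl | rfl
  · exact hw
  · exact hv

end Proj

section SpanningTreeCount
variable {W : Type} {N : SimpleGraph W}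

lemma edgeSet_spanningCoe (T : N.Subgraph) : T.spanningCoe.edgeSet = T.edgeSet := by
  ext f
  induction f using Sym2.ind with
  | _ a b => rfl

lemma spanningCoe_connected_iff (T : N.Subgraph) (hs : T.IsSpanning) :
    T.spanningCoe.Connected ↔ T.coe.Connected :=
  (T.spanningCoeEquivCoeOfSpanning hs).connected_iff

lemma spanningCoe_isTree_iff (T : N.Subgraph) (hs : T.IsSpanning) :
    T.spanningCoe.IsTree ↔ T.coe.IsTree :=
  iso_isTree_iff (T.spanningCoeEquivCoeOfSpanning hs)

/-- Edge count of a spanning tree. -/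
lemma card_edgeSet_of_spanning_tree [Fintype W] (T : N.Subgraph) (hs : T.IsSpanning)
    (ht : T.coe.IsTree) : Nat.card T.edgeSet + 1 = Nat.card W := by
  classical
  have htree : T.spanningCoe.IsTree := (spanningCoe_isTree_iff T hs).mpr ht
  have := htree.card_edgeFinset
  rw [Nat.card_eq_fintype_card (α := W), ← this]
  congr 1
  rw [← edgeSet_spanningCoe, Nat.card_coe_set_eq]
  exact Set.ncard_eq_toFinset_card' _

/-- Conversely, a connected spanning subgraph with the right edge count is a spanning tree. -/
lemma spanning_tree_of_card [Fintype W] (T : N.Subgraph) (hs : T.IsSpanning)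
    (hconn : T.spanningCoe.Connected) (hcard : Nat.card T.edgeSet + 1 = Nat.card W) :
    T.coe.IsTree := by
  classical
  rw [← spanningCoe_isTree_iff T hs]
  refine isTree_of_connected_of_card _ hconn ?_
  rw [edgeSet_spanningCoe, ← Nat.card_coe_set_eq, hcard, Nat.card_eq_fintype_card]

instance finite_subgraph [Finite W] : Finite N.Subgraph := by
  have : Function.Injective (fun H : N.Subgraph => (H.verts, H.Adj)) := by
    intro H H' h
    simp only [Prod.mk.injEq] at h
    exact SimpleGraph.Subgraph.ext h.1 h.2
  exact Finite.of_injective _ this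

end SpanningTreeCount

section Forward
variable {V : Type} {G : SimpleGraph V}

lemma card_edge_subtype {W : Type} {N : SimpleGraph W} (T : N.Subgraph) :
    Nat.card {e : N.edgeSet // (e : Sym2 W) ∈ T.edgeSet} = Nat.card T.edgeSet := by
  refine Nat.card_congr ⟨fun e => ⟨e.1.1, e.2⟩,
    fun s => ⟨⟨s.1, T.edgeSet_subset s.2⟩, s.2⟩, fun e => rfl, fun s => rfl⟩

open Classical in
lemma fiber_card_proj (K : (subdivision G).Subgraph) (hconn : K.spanningCoe.Connected)
    (u₀ : V) (e : G.edgeSet) :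
    Nat.card {v : V // K.Adj (Sum.inl v) (Sum.inr e)} =
      if (e : Sym2 V) ∈ (projSub K).edgeSet then 2 else 1 := by
  by_cases he : (e : Sym2 V) ∈ (projSub K).edgeSet
  · rw [if_pos he, ← card_mem_edge e]
    refine Nat.card_congr (Equiv.subtypeEquivRight fun v => ?_)
    exact ⟨fun h => K.adj_sub h, fun h => (projSub_edge_iff K e).mp he v h⟩
  · rw [if_neg he]
    obtain ⟨v, hv, huniq⟩ := half_unique K hconn e u₀ he
    rw [Nat.card_eq_one_iff_exists]
    exact ⟨⟨v, hv⟩, fun y => Subtype.ext (huniq y.1 y.2)⟩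

lemma proj_spanning_tree [Fintype V] (K : (subdivision G).Subgraph) (hs : K.IsSpanning)
    (ht : K.coe.IsTree) (hne : Nonempty V) :
    (projSub K).coe.IsTree ∧ Nat.card (projSub K).edgeSet + 1 = Nat.card V := by
  classical
  obtain ⟨u₀⟩ := hne
  have hconn : K.spanningCoe.Connected := (spanningCoe_connected_iff K hs).mpr ht.isConnected
  have hcount := card_edgeSet_eq K (fun e => (e : Sym2 V) ∈ (projSub K).edgeSet)
    (fiber_card_proj K hconn u₀)
  rw [card_edge_subtype (projSub K)] at hcount
  have htot := card_edgeSet_of_spanning_tree K hs ht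
  rw [Nat.card_sum] at htot
  have hpos : 0 < Nat.card V := @Nat.card_pos V ⟨u₀⟩ _
  have hVcard : Nat.card (projSub K).edgeSet + 1 = Nat.card V := by omega
  have hprojconn : (projSub K).spanningCoe.Connected := by
    rw [connected_iff]
    refine ⟨fun u v => ?_, ⟨u₀⟩⟩
    obtain ⟨p⟩ := hconn.preconnected (Sum.inl u) (Sum.inl v)
    exact proj_reachable K p.length p rfl u v rfl rfl
  exact ⟨spanning_tree_of_card _ (projSub_isSpanning K) hprojconn hVcard, hVcard⟩

end Forward

section Build
variable {V : Type} {G : SimpleGraph V}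

/-- The choice data for a spanning tree: for each non-tree edge, one of its endpoints. -/
def TreeData (T : G.Subgraph) : Type :=
  ∀ e : {e : G.edgeSet // (e : Sym2 V) ∉ T.edgeSet}, {v : V // v ∈ ((e : G.edgeSet) : Sym2 V)}

/-- Build a spanning subgraph of the subdivision from a spanning tree of `G` together with
choice data: tree edges keep both halves, non-tree edges keep the chosen half. -/
def buildSub (T : G.Subgraph) (f : TreeData T) : (subdivision G).Subgraph where
  verts := Set.univ
  Adj x y :=
    match x, y with
    | Sum.inl v, Sum.inr e =>
        v ∈ (e : Sym2 V) ∧ ∀ he : (e : Sym2 V) ∉ T.edgeSet, (f ⟨e, he⟩ : V) = v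
    | Sum.inr e, Sum.inl v =>
        v ∈ (e : Sym2 V) ∧ ∀ he : (e : Sym2 V) ∉ T.edgeSet, (f ⟨e, he⟩ : V) = v
    | _, _ => False
  adj_sub := by
    rintro (v | e) (w | f') h
    · exact h.elim
    · exact h.1
    · exact h.1
    · exact h.elim
  edge_vert := fun _ => Set.mem_univ _
  symm := by
    constructor
    rintro (v | e) (w | f') h
    · exact h.elim
    · exact h
    · exact h
    · exact h.elim

lemma buildSub_adj (T : G.Subgraph) (f : TreeData T) (v : V) (e : G.edgeSet) :
    (buildSub T f).Adj (Sum.inl v) (Sum.inr e) ↔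
      v ∈ (e : Sym2 V) ∧ ∀ he : (e : Sym2 V) ∉ T.edgeSet, (f ⟨e, he⟩ : V) = v := Iff.rfl

lemma buildSub_isSpanning (T : G.Subgraph) (f : TreeData T) : (buildSub T f).IsSpanning :=
  fun _ => Set.mem_univ _

open Classical in
lemma fiber_card_build (T : G.Subgraph) (f : TreeData T) (e : G.edgeSet) :
    Nat.card {v : V // (buildSub T f).Adj (Sum.inl v) (Sum.inr e)} =
      if (e : Sym2 V) ∈ T.edgeSet then 2 else 1 := by
  by_cases he : (e : Sym2 V) ∈ T.edgeSet
  · rw [if_pos he, ← card_mem_edge e]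
    refine Nat.card_congr (Equiv.subtypeEquivRight fun v => ?_)
    rw [buildSub_adj]
    exact ⟨fun h => h.1, fun h => ⟨h, fun hne => absurd he hne⟩⟩
  · rw [if_neg he, Nat.card_eq_one_iff_exists]
    refine ⟨⟨(f ⟨e, he⟩ : V), ⟨(f ⟨e, he⟩).2, fun _ => rfl⟩⟩, ?_⟩
    rintro ⟨y, hy1, hy2⟩
    exact Subtype.ext (hy2 he).symm

lemma projSub_buildSub (T : G.Subgraph) (hs : T.IsSpanning) (f : TreeData T) :
    projSub (buildSub T f) = T := by
  refine SimpleGraph.Subgraph.ext ((Set.eq_univ_of_forall hs).symm) ?_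
  funext u v
  refine propext ?_
  constructor
  · rintro ⟨h, h1, h2⟩
    by_cases hT : s(u, v) ∈ T.edgeSet
    · exact (SimpleGraph.Subgraph.mem_edgeSet (G' := T)).mp hT
    · have e1 := (h1 : _ ∧ _).2 hT
      have e2 := (h2 : _ ∧ _).2 hT
      exact absurd (e1.symm.trans e2) h.ne
  · intro hT
    have h : G.Adj u v := T.adj_sub hT
    have hTe : s(u, v) ∈ T.edgeSet := (SimpleGraph.Subgraph.mem_edgeSet (G' := T)).mpr hT
    exact ⟨h, ⟨Sym2.mem_mk_left u v, fun hne => absurd hTe hne⟩,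
      ⟨Sym2.mem_mk_right u v, fun hne => absurd hTe hne⟩⟩

lemma buildSub_connected (T : G.Subgraph) (f : TreeData T)
    (hconn : T.spanningCoe.Connected) : (buildSub T f).spanningCoe.Connected := by
  have hlift : ∀ u v : V, T.spanningCoe.Reachable u v →
      (buildSub T f).spanningCoe.Reachable (Sum.inl u) (Sum.inl v) := by
    intro u v hr
    obtain ⟨p⟩ := hr
    induction p with
    | nil => exact Reachable.refl _
    | @cons a b _ h q ih =>
      have hTe : s(a, b) ∈ T.edgeSet := (SimpleGraph.Subgraph.mem_edgeSet (G' := T)).mpr h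
      have ha : (buildSub T f).Adj (Sum.inl a) (Sum.inr ⟨s(a, b), T.adj_sub h⟩) :=
        ⟨Sym2.mem_mk_left a b, fun hne => absurd hTe hne⟩
      have hb : (buildSub T f).Adj (Sum.inl b) (Sum.inr ⟨s(a, b), T.adj_sub h⟩) :=
        ⟨Sym2.mem_mk_right a b, fun hne => absurd hTe hne⟩
      exact ((Adj.reachable ha).trans (Adj.reachable (G := (buildSub T f).spanningCoe) (u := Sum.inr ⟨s(a, b), T.adj_sub h⟩)
          (v := Sum.inl b) hb.symm)).trans ih
  have hhalf : ∀ e : G.edgeSet, ∃ v : V,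
      (buildSub T f).Adj (Sum.inl v) (Sum.inr e) := by
    intro e
    by_cases he : (e : Sym2 V) ∈ T.edgeSet
    · obtain ⟨g, hg⟩ := e
      induction g using Sym2.ind with
      | _ a b =>
        exact ⟨a, Sym2.mem_mk_left a b, fun hne => absurd he hne⟩
    · exact ⟨(f ⟨e, he⟩ : V), (f ⟨e, he⟩).2, fun _ => rfl⟩
  have hne : Nonempty V := hconn.nonempty
  rw [connected_iff]
  refine ⟨?_, ⟨Sum.inl hne.some⟩⟩
  have key : ∀ x : V ⊕ G.edgeSet, ∃ u : V,
      (buildSub T f).spanningCoe.Reachable x (Sum.inl u) := by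
    rintro (u | e)
    · exact ⟨u, Reachable.refl _⟩
    · obtain ⟨v, hv⟩ := hhalf e
      exact ⟨v, (Adj.reachable hv).symm⟩
  intro x y
  obtain ⟨u, hu⟩ := key x
  obtain ⟨v, hv⟩ := key y
  exact (hu.trans (hlift u v (hconn.preconnected u v))).trans hv.symm

lemma buildSub_spanning_tree [Fintype V] (T : G.Subgraph) (hs : T.IsSpanning)
    (ht : T.coe.IsTree) (f : TreeData T) : (buildSub T f).coe.IsTree := by
  classical
  have hconn : T.spanningCoe.Connected := (spanningCoe_connected_iff T hs).mpr ht.isConnected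
  have hcount := card_edgeSet_eq (buildSub T f) (fun e => (e : Sym2 V) ∈ T.edgeSet)
    (fiber_card_build T f)
  rw [card_edge_subtype T] at hcount
  have hT := card_edgeSet_of_spanning_tree T hs ht
  refine spanning_tree_of_card _ (buildSub_isSpanning T f)
    (buildSub_connected T f hconn) ?_
  rw [Nat.card_sum, hcount]
  omega

end Build

section Bij
variable {V : Type} {G : SimpleGraph V} [Fintype V]

instance finite_treeData (T : G.Subgraph) [Finite V] : Finite (TreeData T) := by
  unfold TreeData
  infer_instance

/-- The map from (spanning tree of `G`, choice data) to spanning trees of the subdivision. -/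
noncomputable def Phi (hG : G.Connected) :
    (Σ T : {T : G.Subgraph // T.IsSpanning ∧ T.coe.IsTree}, TreeData T.1) →
      {H : (subdivision G).Subgraph // H.IsSpanning ∧ H.coe.IsTree} :=
  fun p => ⟨buildSub p.1.1 p.2, buildSub_isSpanning _ _,
    buildSub_spanning_tree p.1.1 p.1.2.1 p.1.2.2 p.2⟩

lemma Phi_injective (hG : G.Connected) : Function.Injective (Phi (G := G) hG) := by
  rintro ⟨⟨T, hT⟩, f⟩ ⟨⟨T', hT'⟩, f'⟩ h
  have hK : buildSub T f = buildSub T' f' := congrArg Subtype.val h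
  have hTT : T = T' := by
    rw [← projSub_buildSub T hT.1 f, hK, projSub_buildSub T' hT'.1 f']
  subst hTT
  have hff : f = f' := by
    funext e
    refine Subtype.ext ?_
    have hadj : (buildSub T f).Adj (Sum.inl (f e : V)) (Sum.inr (e : G.edgeSet)) :=
      ⟨(f e).2, fun he => rfl⟩
    rw [hK] at hadj
    exact (hadj.2 e.2).symm
  subst hff
  rfl

lemma Phi_surjective (hG : G.Connected) : Function.Surjective (Phi (G := G) hG) := by
  rintro ⟨K, hs, ht⟩
  obtain ⟨u₀⟩ := hG.nonempty
  have hconn : K.spanningCoe.Connected := (spanningCoe_connected_iff K hs).mpr ht.isConnected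
  obtain ⟨hptree, hpcard⟩ := proj_spanning_tree K hs ht ⟨u₀⟩
  set f : TreeData (projSub K) := fun e =>
    ⟨(half_unique K hconn e.1 u₀ e.2).choose,
      K.adj_sub (half_unique K hconn e.1 u₀ e.2).choose_spec.1⟩ with hf
  refine ⟨⟨⟨projSub K, projSub_isSpanning K, hptree⟩, f⟩, ?_⟩
  refine Subtype.ext ?_
  show buildSub (projSub K) f = K
  refine subdiv_subgraph_ext _ _ ((Set.eq_univ_of_forall hs).symm) ?_
  intro v e
  rw [buildSub_adj]
  by_cases hP : (e : Sym2 V) ∈ (projSub K).edgeSet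
  · constructor
    · rintro ⟨hv, _⟩
      exact (projSub_edge_iff K e).mp hP v hv
    · intro hK
      exact ⟨K.adj_sub hK, fun he => absurd hP he⟩
  · have spec := (half_unique K hconn e u₀ hP).choose_spec
    constructor
    · rintro ⟨hv, hval⟩
      have : (f ⟨e, hP⟩ : V) = v := hval hP
      rw [← this]
      exact spec.1
    · intro hK
      exact ⟨K.adj_sub hK, fun he => (spec.2 v hK).symm⟩

open Classical in
lemma card_treeData (T : G.Subgraph) (r : ℕ)
    (hE : Nat.card G.edgeSet = (Nat.card V - 1) + r)
    (hT : Nat.card T.edgeSet + 1 = Nat.card V) :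
    Nat.card (TreeData T) = 2 ^ r := by
  classical
  have h1 : Nat.card (TreeData T) =
      ∏ e : {e : G.edgeSet // (e : Sym2 V) ∉ T.edgeSet},
        Nat.card {v : V // v ∈ ((e : G.edgeSet) : Sym2 V)} := Nat.card_pi
  rw [h1]
  have h2 : ∀ e : {e : G.edgeSet // (e : Sym2 V) ∉ T.edgeSet},
      Nat.card {v : V // v ∈ ((e : G.edgeSet) : Sym2 V)} = 2 := fun e => card_mem_edge e.1
  simp_rw [h2]
  rw [Finset.prod_const, Finset.card_univ]
  congr 1
  have h3 : Fintype.card {e : G.edgeSet // (e : Sym2 V) ∉ T.edgeSet} =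
      Fintype.card G.edgeSet - Fintype.card {e : G.edgeSet // (e : Sym2 V) ∈ T.edgeSet} :=
    Fintype.card_subtype_compl _
  have h4 : Nat.card {e : G.edgeSet // (e : Sym2 V) ∈ T.edgeSet} = Nat.card T.edgeSet :=
    card_edge_subtype T
  have h5 : Nat.card {e : G.edgeSet // (e : Sym2 V) ∉ T.edgeSet} =
      Fintype.card {e : G.edgeSet // (e : Sym2 V) ∉ T.edgeSet} := Nat.card_eq_fintype_card
  have h6 : Nat.card G.edgeSet = Fintype.card G.edgeSet := Nat.card_eq_fintype_card
  have h7 : Nat.card {e : G.edgeSet // (e : Sym2 V) ∈ T.edgeSet} =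
      Fintype.card {e : G.edgeSet // (e : Sym2 V) ∈ T.edgeSet} := Nat.card_eq_fintype_card
  omega

open Classical in
lemma master_count (hG : G.Connected) (r : ℕ)
    (hr : (r : ℤ) = (Nat.card G.edgeSet : ℤ) - (Nat.card V : ℤ) + 1) :
    numSpanningTrees (subdivision G) = 2 ^ r * numSpanningTrees G := by
  classical
  letI : Fintype {T : G.Subgraph // T.IsSpanning ∧ T.coe.IsTree} := Fintype.ofFinite _
  letI : ∀ T : {T : G.Subgraph // T.IsSpanning ∧ T.coe.IsTree}, Fintype (TreeData T.1) :=
    fun T => Fintype.ofFinite _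
  have hpos : 0 < Nat.card V := @Nat.card_pos V hG.nonempty _
  have hE : Nat.card G.edgeSet = (Nat.card V - 1) + r := by omega
  have hbij := Nat.card_eq_of_bijective _ ⟨Phi_injective hG, Phi_surjective hG⟩
  rw [numSpanningTrees, ← hbij, Nat.card_eq_fintype_card, Fintype.card_sigma]
  have hterm : ∀ T : {T : G.Subgraph // T.IsSpanning ∧ T.coe.IsTree},
      Fintype.card (TreeData T.1) = 2 ^ r := by
    intro T
    rw [← Nat.card_eq_fintype_card]
    exact card_treeData T.1 r hE (card_edgeSet_of_spanning_tree T.1 T.2.1 T.2.2)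
  simp_rw [hterm]
  rw [Finset.sum_const, Finset.card_univ, smul_eq_mul, numSpanningTrees,
    Nat.card_eq_fintype_card, mul_comm]

end Bij

section Iterate
variable {V : Type} {G : SimpleGraph V}

lemma subdivision_connected (hG : G.Connected) : (subdivision G).Connected := by
  have f : TreeData (⊤ : G.Subgraph) := fun e => absurd e.1.2 e.2
  have hconn : (⊤ : G.Subgraph).spanningCoe.Connected := by
    rw [SimpleGraph.Subgraph.spanningCoe_top]; exact hG
  exact ((buildSub_connected ⊤ f hconn).mono (SimpleGraph.Subgraph.spanningCoe_le _))

open Classical in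
lemma card_edgeSet_subdivision [Fintype V] :
    Nat.card (subdivision G).edgeSet = 2 * Nat.card G.edgeSet := by
  classical
  have h := card_edgeSet_eq (⊤ : (subdivision G).Subgraph) (fun _ => True) (fun e => by
    rw [if_pos trivial, ← card_mem_edge e]
    refine Nat.card_congr (Equiv.subtypeEquivRight fun v => ?_)
    rw [SimpleGraph.Subgraph.top_adj]
    exact Iff.rfl)
  have htop : (⊤ : (subdivision G).Subgraph).edgeSet = (subdivision G).edgeSet :=
    SimpleGraph.Subgraph.edgeSet_top
  rw [htop] at h
  rw [h]
  have h2 : Nat.card {e : G.edgeSet // True} = Nat.card G.edgeSet :=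
    Nat.card_congr (Equiv.subtypeUnivEquiv fun _ => trivial)
  omega

end Iterate


/-- `N_st(s(G)) = 2^r · N_st(G)`, hence `N_st(sⁿ(G)) = 2^{rn} · N_st(G)`,
where `r = E₀ − N₀ + 1` is the circuit rank of `G`. -/
theorem subdivision_spanningTrees {V : Type} [Finite V] (G : SimpleGraph V)
    (hG : G.Connected) (r : ℕ)
    (hr : (r : ℤ) = (Nat.card G.edgeSet : ℤ) - (Nat.card V : ℤ) + 1) :
    numSpanningTrees (subdivision G) = 2 ^ r * numSpanningTrees G ∧
    ∀ n : ℕ, numSpanningTrees (iterSubdiv G n).2 = 2 ^ (r * n) * numSpanningTrees G := by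
  classical
  constructor
  · letI := Fintype.ofFinite V
    exact master_count hG r hr
  · have key : ∀ n : ℕ, (iterSubdiv G n).2.Connected ∧
        ((r : ℤ) = (Nat.card (iterSubdiv G n).2.edgeSet : ℤ) -
          (Nat.card (iterSubdiv G n).1 : ℤ) + 1) ∧
        numSpanningTrees (iterSubdiv G n).2 = 2 ^ (r * n) * numSpanningTrees G := by
      intro n
      induction n with
      | zero => exact ⟨hG, hr, by simp [iterSubdiv]⟩
      | succ n ih =>
        obtain ⟨hc, hrn, hcount⟩ := ih
        haveI : Finite (iterSubdiv G n).1 := iterSubdivFinite G n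
        letI := Fintype.ofFinite (iterSubdiv G n).1
        refine ⟨subdivision_connected hc, ?_, ?_⟩
        · show (r : ℤ) = (Nat.card (subdivision (iterSubdiv G n).2).edgeSet : ℤ) -
            (Nat.card ((iterSubdiv G n).1 ⊕ (iterSubdiv G n).2.edgeSet) : ℤ) + 1
          rw [card_edgeSet_subdivision, Nat.card_sum]
          push_cast
          omega
        · show numSpanningTrees (subdivision (iterSubdiv G n).2) =
            2 ^ (r * (n + 1)) * numSpanningTrees G
          rw [master_count hc r hrn, hcount, ← mul_assoc, ← pow_add]
          have harith : r + r * n = r * (n + 1) := by ring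
          rw [harith]
    intro n
    exact (key n).2.2
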